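/- Let n jobs have processing times a_i, b_i ∈ ℕ with 1 ≤ a_i ≤ b_i and a_1 ≤ … ≤ a_n, and let p be the rightmost pivot of the full sequence. Then for each job J_i with i < p, the contribution of J_i satisfies δ_i = a_i. -/
import Mathlib


/-- The value of the critical path through job `k` when the jobs of `S` are
scheduled in SPT (increasing-index) order:
`∑_{i ∈ S, i ≤ k} a i + ∑_{j ∈ S, j ≥ k} b j`. -/
def jobVal {n : ℕ} (a b : Fin n → ℕ) (S : Finset (Fin n)) (k : Fin n) : ℕ :=
  ∑ i ∈ S.filter (fun i => i ≤ k), a i + ∑ j ∈ S.filter (fun j => k ≤ j), b j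

/-- The makespan of the subset `S` of jobs scheduled in SPT (increasing-index)
order: `C(S) = max_{k ∈ S} (∑_{i ∈ S, i ≤ k} a i + ∑_{j ∈ S, j ≥ k} b j)`,
with `C(∅) = 0`. -/
def makespanOf {n : ℕ} (a b : Fin n → ℕ) (S : Finset (Fin n)) : ℕ :=
  S.sup (jobVal a b S)

/-- Let `p` be the rightmost pivot of the full sequence (the
largest index attaining the maximum in `C({1,…,n})`).  Then every job `i` to
the left of the pivot has contribution `δ i = C(S) - C(S \ {i}) = a i`. -/
theorem contribution_left_of_pivot (n : ℕ) (a b : Fin n → ℕ)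
    (ha1 : ∀ i, 1 ≤ a i) (hab : ∀ i, a i ≤ b i) (hmono : Monotone a)
    (p : Fin n)
    (hp : jobVal a b Finset.univ p = makespanOf a b Finset.univ)
    (hpmax : ∀ k : Fin n,
      jobVal a b Finset.univ k = makespanOf a b Finset.univ → k ≤ p)
    (i : Fin n) (hi : i < p) :
    makespanOf a b Finset.univ - makespanOf a b (Finset.univ.erase i) = a i := by
  set C := makespanOf a b Finset.univ with hC
  set S := Finset.univ.erase i with hS
  -- key identities
  have key : ∀ k : Fin n, i < k → jobVal a b S k + a i = jobVal a b Finset.univ k := by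
    intro k hk
    unfold jobVal
    have h2 : S.filter (fun j => k ≤ j) = Finset.univ.filter (fun j => k ≤ j) := by
      rw [hS, Finset.filter_erase]
      exact Finset.erase_eq_of_notMem (by simp [not_le.mpr hk])
    rw [h2, add_right_comm]
    congr 1
    have h1 : S.filter (fun j => j ≤ k) = (Finset.univ.filter (fun j => j ≤ k)).erase i := by
      rw [hS, Finset.filter_erase]
    rw [h1, Finset.sum_erase_add _ _ (by simp [hk.le])]
  have key2 : ∀ k : Fin n, k < i → jobVal a b S k + b i = jobVal a b Finset.univ k := by
    intro k hk
    unfold jobVal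
    have h2 : S.filter (fun j => j ≤ k) = Finset.univ.filter (fun j => j ≤ k) := by
      rw [hS, Finset.filter_erase]
      exact Finset.erase_eq_of_notMem (by simp [not_le.mpr hk])
    rw [h2, add_assoc]
    congr 1
    have h1 : S.filter (fun j => k ≤ j) = (Finset.univ.filter (fun j => k ≤ j)).erase i := by
      rw [hS, Finset.filter_erase]
    rw [h1, Finset.sum_erase_add _ _ (by simp [hk.le])]
  have haiC : a i ≤ C := by
    rw [← hp]
    calc a i ≤ ∑ j ∈ Finset.univ.filter (fun j => j ≤ p), a j :=
          Finset.single_le_sum (fun _ _ => Nat.zero_le _) (by simp [hi.le])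
      _ ≤ jobVal a b Finset.univ p := Nat.le_add_right _ _
  have hSp : jobVal a b S p = C - a i := by
    have := key p hi
    omega
  have hge : C - a i ≤ makespanOf a b S := by
    rw [← hSp]
    exact Finset.le_sup (Finset.mem_erase.mpr ⟨hi.ne', Finset.mem_univ _⟩)
  have hle : makespanOf a b S ≤ C - a i := by
    apply Finset.sup_le
    intro k hk
    have hkne : k ≠ i := (Finset.mem_erase.mp hk).1
    have hkC : jobVal a b Finset.univ k ≤ C := Finset.le_sup (Finset.mem_univ k)
    rcases lt_or_gt_of_ne hkne with h | h
    · have := key2 k h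
      have hb := hab i
      omega
    · have := key k h
      omega
  omega
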